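/- Define w_c(y) := φ(y+c)² φ(y−c) / (φ(y+c) + φ(y−c))³ for c > 0. Then for all 0 < c < τ, the integral ∫_ℝ w_c(y) · y · φ(y−τ) dy is strictly positive, and for all 0 < τ < c it is strictly negative; it vanishes when τ = c. -/

import Mathlib

open Real MeasureTheory

/-- The standard normal density. -/
noncomputable def gaussPdf (x : ℝ) : ℝ :=
  (Real.sqrt (2 * Real.pi))⁻¹ * Real.exp (-(x ^ 2) / 2)

/-- ρ(a) = ∫ (1/(exp(2ay)+1))² φ(y−a) dy. -/
noncomputable def ρ (a : ℝ) : ℝ :=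
  ∫ y : ℝ, (1 / (Real.exp (2 * a * y) + 1)) ^ 2 * gaussPdf (y - a)

/-- w_c(y) = φ(y+c)²φ(y−c)/(φ(y+c)+φ(y−c))³. -/
noncomputable def w (c y : ℝ) : ℝ :=
  gaussPdf (y + c) ^ 2 * gaussPdf (y - c) / (gaussPdf (y + c) + gaussPdf (y - c)) ^ 3

lemma gaussPdf_pos (x : ℝ) : 0 < gaussPdf x := by
  unfold gaussPdf; have := Real.pi_pos; positivity

@[fun_prop]
lemma cont_gaussPdf : Continuous gaussPdf := by unfold gaussPdf; fun_prop

lemma gaussPdf_even (x : ℝ) : gaussPdf (-x) = gaussPdf x := by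
  simp [gaussPdf, neg_sq]

lemma gaussPdf_mul (a b : ℝ) :
    gaussPdf a * gaussPdf b
      = (Real.sqrt (2 * Real.pi))⁻¹ ^ 2 * Real.exp (-(a ^ 2 + b ^ 2) / 2) := by
  unfold gaussPdf
  rw [mul_mul_mul_comm, ← Real.exp_add]
  ring_nf

/-- the even-part identity for the integrand. -/
lemma sum_eq (c τ y : ℝ) :
    w c y * (y * gaussPdf (y - τ)) + w c (-y) * ((-y) * gaussPdf (-y - τ)) =
      y * (gaussPdf (y + c) * gaussPdf (y - c) / (gaussPdf (y + c) + gaussPdf (y - c)) ^ 3 *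
        ((Real.sqrt (2 * Real.pi))⁻¹ ^ 2 * Real.exp (-(y ^ 2) - (c ^ 2 + τ ^ 2) / 2))) *
        (Real.exp ((τ - c) * y) - Real.exp (-((τ - c) * y))) := by
  have h1 : gaussPdf (y + c) * gaussPdf (y - τ)
      = (Real.sqrt (2 * Real.pi))⁻¹ ^ 2 * Real.exp (-(y ^ 2) - (c ^ 2 + τ ^ 2) / 2)
        * Real.exp ((τ - c) * y) := by
    rw [gaussPdf_mul, mul_assoc, ← Real.exp_add]; congr 2; ring
  have h2 : gaussPdf (y - c) * gaussPdf (y + τ)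
      = (Real.sqrt (2 * Real.pi))⁻¹ ^ 2 * Real.exp (-(y ^ 2) - (c ^ 2 + τ ^ 2) / 2)
        * Real.exp (-((τ - c) * y)) := by
    rw [gaussPdf_mul, mul_assoc, ← Real.exp_add]; congr 2; ring
  unfold w
  rw [show -y + c = -(y - c) by ring, show -y - c = -(y + c) by ring,
    show -y - τ = -(y + τ) by ring, gaussPdf_even, gaussPdf_even, gaussPdf_even]
  have hp := gaussPdf_pos (y + c)
  have hm := gaussPdf_pos (y - c)
  set P := gaussPdf (y + c) with hP
  set M := gaussPdf (y - c) with hM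
  set T := gaussPdf (y - τ) with hT
  set T' := gaussPdf (y + τ) with hT'
  set A2 := (Real.sqrt (2 * Real.pi))⁻¹ ^ 2 with hA2
  set E := Real.exp (-(y ^ 2) - (c ^ 2 + τ ^ 2) / 2) with hE
  set ek := Real.exp ((τ - c) * y) with hek
  set emk := Real.exp (-((τ - c) * y)) with hemk
  have hS : P + M ≠ 0 := by positivity
  rw [show M + P = P + M by ring]
  field_simp
  linear_combination y * h1 - y * h2

lemma w_nonneg (c y : ℝ) : 0 ≤ w c y := by
  unfold w
  have := gaussPdf_pos (y + c); have := gaussPdf_pos (y - c)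
  positivity

lemma w_le_one (c y : ℝ) : w c y ≤ 1 := by
  unfold w
  have hp := gaussPdf_pos (y + c); have hm := gaussPdf_pos (y - c)
  rw [div_le_one (by positivity)]
  calc gaussPdf (y + c) ^ 2 * gaussPdf (y - c)
      ≤ (gaussPdf (y + c) + gaussPdf (y - c)) ^ 2 * (gaussPdf (y + c) + gaussPdf (y - c)) := by
        gcongr <;> linarith
    _ = (gaussPdf (y + c) + gaussPdf (y - c)) ^ 3 := by ring

lemma integrable_mul_gaussPdf (τ : ℝ) :
    Integrable (fun y : ℝ => y * gaussPdf (y - τ)) := by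
  have h1 : Integrable (fun x : ℝ => x * gaussPdf x) := by
    have := (integrable_mul_exp_neg_mul_sq (by norm_num : (0:ℝ) < 1/2)).const_mul
      ((Real.sqrt (2 * Real.pi))⁻¹)
    refine this.congr (Filter.Eventually.of_forall fun x => ?_)
    simp only [gaussPdf]
    rw [show -(1/2 : ℝ) * x ^ 2 = -(x ^ 2) / 2 by ring]
    ring
  have h2 : Integrable gaussPdf := by
    have := (integrable_exp_neg_mul_sq (by norm_num : (0:ℝ) < 1/2)).const_mul
      ((Real.sqrt (2 * Real.pi))⁻¹)
    refine this.congr (Filter.Eventually.of_forall fun x => ?_)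
    simp only [gaussPdf]
    rw [show -(1/2 : ℝ) * x ^ 2 = -(x ^ 2) / 2 by ring]
  have h3 : Integrable (fun x : ℝ => (x + τ) * gaussPdf x) := by
    refine (h1.add (h2.const_mul τ)).congr (Filter.Eventually.of_forall fun x => ?_)
    simp; ring
  have h4 := h3.comp_sub_right τ
  refine h4.congr (Filter.Eventually.of_forall fun x => ?_)
  simp

lemma cont_w (c : ℝ) : Continuous (w c) := by
  unfold w
  refine Continuous.div (by fun_prop) (by fun_prop) fun y => ?_
  have := gaussPdf_pos (y + c); have := gaussPdf_pos (y - c)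
  positivity

lemma integrable_h (c τ : ℝ) :
    Integrable (fun y : ℝ => w c y * (y * gaussPdf (y - τ))) := by
  refine (integrable_mul_gaussPdf τ).mono
    (((cont_w c).mul (continuous_id.mul
      (cont_gaussPdf.comp (continuous_id.sub continuous_const)))).aestronglyMeasurable)
    (Filter.Eventually.of_forall fun y => ?_)
  have h0 := gaussPdf_pos (y - τ)
  rw [Real.norm_eq_abs, Real.norm_eq_abs, abs_mul, abs_of_nonneg (w_nonneg c y)]
  calc w c y * |y * gaussPdf (y - τ)| ≤ 1 * |y * gaussPdf (y - τ)| := by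
        gcongr; exact w_le_one c y
    _ = |y * gaussPdf (y - τ)| := one_mul _

lemma sign_aux {k : ℝ} (hk : 0 < k) (y : ℝ) :
    0 ≤ y * (Real.exp (k * y) - Real.exp (-(k * y))) := by
  rcases le_or_gt 0 y with hy | hy
  · apply mul_nonneg hy
    have : -(k * y) ≤ k * y := by nlinarith
    linarith [Real.exp_le_exp.mpr this]
  · have hle : k * y ≤ -(k * y) := by nlinarith
    have h2 := Real.exp_le_exp.mpr hle
    nlinarith [mul_nonneg (by linarith : (0:ℝ) ≤ -y)
      (by linarith : 0 ≤ Real.exp (-(k * y)) - Real.exp (k * y))]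

lemma sign_aux' {k : ℝ} (hk : 0 < k) {y : ℝ} (hy : 0 < y) :
    0 < y * (Real.exp (k * y) - Real.exp (-(k * y))) := by
  apply mul_pos hy
  have : -(k * y) < k * y := by nlinarith
  linarith [Real.exp_lt_exp.mpr this]

/-- The core positivity lemma: no sign conditions on c, τ needed beyond c < τ. -/
lemma core {c τ : ℝ} (hcτ : c < τ) :
    0 < ∫ y : ℝ, w c y * (y * gaussPdf (y - τ)) := by
  set h : ℝ → ℝ := fun y => w c y * (y * gaussPdf (y - τ)) with hh
  have ih : Integrable h := integrable_h c τ
  have ihn : Integrable (fun y => h (-y)) := ih.comp_neg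
  set Q : ℝ → ℝ := fun y =>
    gaussPdf (y + c) * gaussPdf (y - c) / (gaussPdf (y + c) + gaussPdf (y - c)) ^ 3 *
      ((Real.sqrt (2 * Real.pi))⁻¹ ^ 2 * Real.exp (-(y ^ 2) - (c ^ 2 + τ ^ 2) / 2)) with hQ
  have hQpos : ∀ y, 0 < Q y := by
    intro y
    have := gaussPdf_pos (y + c); have := gaussPdf_pos (y - c)
    have h2π : (0:ℝ) < Real.sqrt (2 * Real.pi) := by
      have := Real.pi_pos; positivity
    rw [hQ]; positivity
  have hk : 0 < τ - c := by linarith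
  have key : ∀ y, h y + h (-y)
      = Q y * (y * (Real.exp ((τ - c) * y) - Real.exp (-((τ - c) * y)))) := by
    intro y
    rw [hh]
    have := sum_eq c τ y
    rw [this]; ring
  have hnonneg : ∀ y, 0 ≤ h y + h (-y) := fun y => by
    rw [key y]; exact mul_nonneg (hQpos y).le (sign_aux hk y)
  have hgint : Integrable (fun y => h y + h (-y)) := ih.add ihn
  have hpos : 0 < ∫ y, (h y + h (-y)) := by
    rw [integral_pos_iff_support_of_nonneg hnonneg hgint]
    have hsub : Set.Ioi (0:ℝ) ⊆ Function.support fun y => h y + h (-y) := by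
      intro y hy
      have : 0 < h y + h (-y) := by
        rw [key y]; exact mul_pos (hQpos y) (sign_aux' hk hy)
      exact ne_of_gt this
    calc (0:ENNReal) < volume (Set.Ioi (0:ℝ)) := by simp [Real.volume_Ioi]
      _ ≤ volume (Function.support fun y => h y + h (-y)) := measure_mono hsub
  have heq : (∫ y, (h y + h (-y))) = 2 * ∫ y, h y := by
    rw [integral_add ih ihn, integral_neg_eq_self h]; ring
  rw [heq] at hpos
  linarith

/-- flipping the signs of both parameters negates the integral. -/
lemma integral_flip (c τ : ℝ) :
    (∫ y : ℝ, w (-c) y * (y * gaussPdf (y - -τ)))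
      = -∫ y : ℝ, w c y * (y * gaussPdf (y - τ)) := by
  have h1 : ∀ y : ℝ, w (-c) (-y) * ((-y) * gaussPdf ((-y) - -τ))
      = -(w c y * (y * gaussPdf (y - τ))) := by
    intro y
    have hw : w (-c) (-y) = w c y := by
      unfold w
      rw [show -y + -c = -(y + c) by ring, show -y - -c = -(y - c) by ring,
        gaussPdf_even, gaussPdf_even]
    have hg : gaussPdf ((-y) - -τ) = gaussPdf (y - τ) := by
      rw [show (-y) - -τ = -(y - τ) by ring, gaussPdf_even]
    rw [hw, hg]; ring
  calc (∫ y : ℝ, w (-c) y * (y * gaussPdf (y - -τ)))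
      = ∫ y : ℝ, w (-c) (-y) * ((-y) * gaussPdf ((-y) - -τ)) :=
        (integral_neg_eq_self (fun y : ℝ => w (-c) y * (y * gaussPdf (y - -τ))) volume).symm
    _ = ∫ y : ℝ, -(w c y * (y * gaussPdf (y - τ))) := by simp_rw [h1]
    _ = -∫ y : ℝ, w c y * (y * gaussPdf (y - τ)) := integral_neg _

/-- ∫ w_c(y)·y·φ(y−τ) dy is strictly positive for 0 < c < τ, strictly negative for
0 < τ < c, and vanishes when τ = c. -/
theorem stmt_19 :
    (∀ c τ : ℝ, 0 < c → c < τ → 0 < ∫ y : ℝ, w c y * (y * gaussPdf (y - τ))) ∧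
    (∀ c τ : ℝ, 0 < τ → τ < c → (∫ y : ℝ, w c y * (y * gaussPdf (y - τ))) < 0) ∧
    (∀ c : ℝ, 0 < c → (∫ y : ℝ, w c y * (y * gaussPdf (y - c))) = 0) := by
  refine ⟨fun c τ _ hcτ => core hcτ, fun c τ _ hτc => ?_, fun c _ => ?_⟩
  · have := core (show -c < -τ by linarith)
    rw [integral_flip c τ] at this
    linarith
  · -- the integrand is odd when τ = c
    have hodd : ∀ y : ℝ, w c (-y) * ((-y) * gaussPdf (-y - c))
        = -(w c y * (y * gaussPdf (y - c))) := by
      intro y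
      have := sum_eq c c y
      simp only [sub_self, zero_mul, Real.exp_zero, neg_zero, sub_zero] at this
      rw [mul_zero] at this
      linarith [this]
    have : (∫ y : ℝ, w c y * (y * gaussPdf (y - c)))
        = -∫ y : ℝ, w c y * (y * gaussPdf (y - c)) := by
      calc (∫ y : ℝ, w c y * (y * gaussPdf (y - c)))
          = ∫ y : ℝ, w c (-y) * ((-y) * gaussPdf (-y - c)) :=
            (integral_neg_eq_self (fun y : ℝ => w c y * (y * gaussPdf (y - c))) volume).symm
        _ = ∫ y : ℝ, -(w c y * (y * gaussPdf (y - c))) := by simp_rw [hodd]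
        _ = -∫ y : ℝ, w c y * (y * gaussPdf (y - c)) := integral_neg _
    linarith
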